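/- Let p be a probability distribution on {0,1}^n with Σ_x p(x)² ≤ α/2^n for some α ≥ 1, let 0 < δ < 1, let c ≥ 1 be an integer, set F = 10(n^c + 1)/δ, and let 0 ≤ λ ≤ 1. Suppose p̂' : {0,1}^n → ℝ satisfies |p̂(s) − p̂'(s)| ≤ 1/(2^n F) for every s with |s| ≤ c. Then 2^{2n} Σ_{s: |s| ≤ c} (1−λ)^{2|s|} p̂'(s)² ≤ α + 1. -/

import Mathlib

/-- Dot product of two bit strings, `s·x = Σ_j s_j x_j`. -/
def dot {n : ℕ} (s x : Fin n → Bool) : ℕ :=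
  (Finset.univ.filter fun j => s j && x j).card

/-- Hamming weight `|s| = Σ_j s_j`. -/
def wt {n : ℕ} (s : Fin n → Bool) : ℕ :=
  (Finset.univ.filter fun j => s j).card

/-- Fourier coefficient `f̂(s) = 2^{-n} Σ_x f(x) (-1)^{s·x}`. -/
noncomputable def fhat {n : ℕ} (f : (Fin n → Bool) → ℝ) (s : Fin n → Bool) : ℝ :=
  (1 / 2 ^ n) * ∑ x, f x * (-1 : ℝ) ^ dot s x

open Finset

lemma sign_dot {n : ℕ} (s x : Fin n → Bool) :
    ((-1:ℝ)) ^ dot s x = ∏ j, (if s j && x j then (-1:ℝ) else 1) := by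
  rw [dot, ← Finset.prod_const, Finset.prod_filter]

lemma orth {n : ℕ} (x y : Fin n → Bool) :
    ∑ s : Fin n → Bool, ((-1:ℝ)) ^ dot s x * (-1) ^ dot s y
      = if x = y then (2:ℝ)^n else 0 := by
  have h : ∀ s : Fin n → Bool, ((-1:ℝ)) ^ dot s x * (-1) ^ dot s y
      = ∏ j, ((if s j && x j then (-1:ℝ) else 1) * (if s j && y j then (-1:ℝ) else 1)) := by
    intro s
    rw [sign_dot, sign_dot, Finset.prod_mul_distrib]
  simp_rw [h]
  rw [← Fintype.piFinset_univ,
    ← Finset.prod_univ_sum (fun _ : Fin n => (univ : Finset Bool))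
      (fun j b => (if b && x j then (-1:ℝ) else 1) * (if b && y j then (-1:ℝ) else 1))]
  have h2 : ∀ j : Fin n, ∑ b ∈ (univ : Finset Bool),
      ((if b && x j then (-1:ℝ) else 1) * (if b && y j then (-1:ℝ) else 1))
      = if x j = y j then 2 else 0 := by
    intro j
    cases hx : x j <;> cases hy : y j <;> simp <;> norm_num
  simp_rw [h2]
  by_cases hxy : x = y
  · subst hxy; simp
  · rw [if_neg hxy]
    obtain ⟨j, hj⟩ : ∃ j, x j ≠ y j := by
      by_contra hcon; push_neg at hcon; exact hxy (funext hcon)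
    exact Finset.prod_eq_zero (mem_univ j) (if_neg hj)

lemma parseval {n : ℕ} (p : (Fin n → Bool) → ℝ) :
    ∑ s : Fin n → Bool, fhat p s ^ 2 = (1 / 2^n) * ∑ x, p x ^ 2 := by
  have expand : ∀ s : Fin n → Bool, fhat p s ^ 2
      = (1/2^n)^2 * ∑ x : Fin n → Bool, ∑ y : Fin n → Bool,
          p x * p y * (((-1:ℝ)) ^ dot s x * (-1) ^ dot s y) := by
    intro s
    rw [fhat, mul_pow]
    congr 1
    rw [sq, Finset.sum_mul_sum]
    exact Finset.sum_congr rfl fun x _ => Finset.sum_congr rfl fun y _ => by ring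
  simp_rw [expand, ← Finset.mul_sum]
  have key : ∑ s : Fin n → Bool, ∑ x : Fin n → Bool, ∑ y : Fin n → Bool,
      p x * p y * (((-1:ℝ)) ^ dot s x * (-1) ^ dot s y) = 2^n * ∑ x, p x ^ 2 := by
    rw [Finset.sum_comm]
    have swap : ∀ x : Fin n → Bool,
        ∑ s : Fin n → Bool, ∑ y : Fin n → Bool, p x * p y * (((-1:ℝ)) ^ dot s x * (-1) ^ dot s y)
        = ∑ y : Fin n → Bool, p x * p y * (if x = y then (2:ℝ)^n else 0) := by
      intro x
      rw [Finset.sum_comm]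
      refine Finset.sum_congr rfl fun y _ => ?_
      rw [← Finset.mul_sum, orth]
    simp_rw [swap]
    have diag : ∀ x : Fin n → Bool,
        ∑ y : Fin n → Bool, p x * p y * (if x = y then (2:ℝ)^n else 0) = 2^n * p x ^2 := by
      intro x
      rw [Finset.sum_eq_single x]
      · simp [sq]; ring
      · intro y _ hy
        rw [if_neg (Ne.symm hy), mul_zero]
      · simp
    simp_rw [diag]
    rw [← Finset.mul_sum]
  rw [key]
  have h2n : (2:ℝ)^n ≠ 0 := by positivity
  field_simp

lemma count_wt_le {n c : ℕ} (hc : 1 ≤ c) :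
    (Finset.univ.filter fun s : Fin n → Bool => wt s ≤ c).card ≤ n ^ c + 1 := by
  rcases Nat.eq_zero_or_pos n with hn | hn
  · subst hn
    calc (Finset.univ.filter fun s : Fin 0 → Bool => wt s ≤ c).card
        ≤ (univ : Finset (Fin 0 → Bool)).card := Finset.card_le_card (Finset.filter_subset _ _)
      _ = 1 := by simp
      _ ≤ 0 ^ c + 1 := le_add_self
  haveI : Inhabited (Fin n) := ⟨⟨0, hn⟩⟩
  set T := Finset.univ.filter fun s : Fin n → Bool => wt s ≤ c with hT
  set z : Fin n → Bool := fun _ => false with hz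
  have hzT : z ∈ T := by
    simp only [hT, Finset.mem_filter, Finset.mem_univ, true_and]
    simp [wt, hz]
  have h1 : T.card = (T.erase z).card + 1 := (Finset.card_erase_add_one hzT).symm
  rw [h1]
  have h2 : (T.erase z).card ≤ n ^ c := by
    set A : (Fin n → Bool) → Finset (Fin n) := fun s => Finset.univ.filter fun j => s j with hA
    set l : (Fin n → Bool) → List (Fin n) := fun s => (A s).sort (· ≤ ·) with hl
    set g : (Fin n → Bool) → (Fin c → Fin n) := fun s i => (l s).getD i (l s).head! with hg
    have himg : ∀ s ∈ T.erase z, Finset.image (g s) Finset.univ = A s := by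
      intro s hs
      rw [Finset.mem_erase] at hs
      obtain ⟨hsz, hsT⟩ := hs
      rw [hT, Finset.mem_filter] at hsT
      have hlen : (l s).length = (A s).card := Finset.length_sort _
      have hcard : (A s).card ≤ c := hsT.2
      have hne : (l s) ≠ [] := by
        intro hnil
        apply hsz
        funext j
        have : j ∉ A s := by
          intro hj
          have : j ∈ l s := (Finset.mem_sort _).mpr hj
          simp [hnil] at this
        simp only [hA, Finset.mem_filter, Finset.mem_univ, true_and] at this
        simpa [hz] using this
      apply Finset.Subset.antisymm
      · intro a ha
        rw [Finset.mem_image] at ha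
        obtain ⟨i, _, hi⟩ := ha
        replace hi : (l s).getD i (l s).head! = a := hi
        by_cases hilt : (i : ℕ) < (l s).length
        · rw [List.getD_eq_getElem _ _ hilt] at hi
          have : a ∈ l s := hi ▸ List.getElem_mem hilt
          exact (Finset.mem_sort _).mp this
        · rw [List.getD_eq_default _ _ (le_of_not_gt hilt)] at hi
          have : (l s).head! ∈ l s := List.head!_mem_self hne
          exact (Finset.mem_sort _).mp (hi ▸ this)
      · intro a ha
        have hal : a ∈ l s := (Finset.mem_sort _).mpr ha
        rw [List.mem_iff_getElem] at hal
        obtain ⟨i, hilt, hi⟩ := hal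
        have hic : i < c := lt_of_lt_of_le hilt (hlen ▸ hcard)
        rw [Finset.mem_image]
        refine ⟨⟨i, hic⟩, Finset.mem_univ _, ?_⟩
        show (l s).getD i (l s).head! = a
        rw [List.getD_eq_getElem _ _ hilt]
        exact hi
    have hinj : Set.InjOn g (T.erase z) := by
      intro s hs s' hs' hgss'
      have hAeq : A s = A s' := by
        rw [← himg s hs, ← himg s' hs', hgss']
      funext j
      have hj : (j ∈ A s) ↔ (j ∈ A s') := by rw [hAeq]
      simp only [hA, Finset.mem_filter, Finset.mem_univ, true_and] at hj
      cases h : s j <;> cases h' : s' j <;> simp_all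
    calc (T.erase z).card ≤ (univ : Finset (Fin c → Fin n)).card :=
          Finset.card_le_card_of_injOn g (fun _ _ => Finset.mem_univ _) hinj
      _ = n ^ c := by simp [Fintype.card_fun]
  omega

lemma fhat_abs_le {n : ℕ} (p : (Fin n → Bool) → ℝ) (hp0 : ∀ x, 0 ≤ p x)
    (hp1 : ∑ x, p x = 1) (s : Fin n → Bool) : |fhat p s| ≤ 1 / 2^n := by
  rw [fhat, abs_mul]
  have h1 : |(1:ℝ) / 2^n| = 1/2^n := abs_of_pos (by positivity)
  rw [h1]
  have h2 : |∑ x, p x * (-1 : ℝ) ^ dot s x| ≤ 1 := by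
    calc |∑ x, p x * (-1 : ℝ) ^ dot s x| ≤ ∑ x, |p x * (-1 : ℝ) ^ dot s x| :=
          Finset.abs_sum_le_sum_abs _ _
      _ = ∑ x, p x := by
          refine Finset.sum_congr rfl fun x _ => ?_
          rw [abs_mul, abs_pow, abs_neg, abs_one, one_pow, mul_one, abs_of_nonneg (hp0 x)]
      _ = 1 := hp1
  calc (1:ℝ)/2^n * |∑ x, p x * (-1 : ℝ) ^ dot s x| ≤ 1/2^n * 1 :=
        mul_le_mul_of_nonneg_left h2 (by positivity)
    _ = 1/2^n := mul_one _

lemma tail_bound (K F N α : ℝ) (hK0 : 0 < K) (hF0 : 0 < F) (hN0 : 0 ≤ N)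
    (h10N : 10 * N ≤ F) (hFge : 10 ≤ F) :
    K^2 * (α/K^2 + N*(2*(1/K)*(1/(K*F)) + (1/(K*F))^2)) ≤ α + 1 := by
  have hK : K ≠ 0 := ne_of_gt hK0
  have hFne : F ≠ 0 := ne_of_gt hF0
  have key : K^2 * (α/K^2 + N*(2*(1/K)*(1/(K*F)) + (1/(K*F))^2))
      = α + N*(2*F+1)/F^2 := by
    field_simp
  rw [key]
  have h2 : N*(2*F+1)/F^2 ≤ 1 := by
    rw [div_le_one (by positivity)]
    nlinarith [mul_nonneg (sub_nonneg.mpr h10N) hF0.le, mul_nonneg hN0 (sub_nonneg.mpr hFge)]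
  linarith

theorem stmt12 {n : ℕ} (p phat' : (Fin n → Bool) → ℝ) (α δ lam : ℝ) (c : ℕ)
    (hp0 : ∀ x, 0 ≤ p x) (hp1 : ∑ x, p x = 1)
    (hα : 1 ≤ α) (hp2 : ∑ x, p x ^ 2 ≤ α / 2 ^ n)
    (hδ0 : 0 < δ) (hδ1 : δ < 1) (hc : 1 ≤ c)
    (F : ℝ) (hF : F = 10 * ((n : ℝ) ^ c + 1) / δ)
    (hlam0 : 0 ≤ lam) (hlam1 : lam ≤ 1)
    (happrox : ∀ s, wt s ≤ c → |fhat p s - phat' s| ≤ 1 / (2 ^ n * F)) :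
    2 ^ (2 * n) *
        ∑ s ∈ Finset.univ.filter (fun s : Fin n → Bool => wt s ≤ c),
          (1 - lam) ^ (2 * wt s) * phat' s ^ 2
      ≤ α + 1 := by
  have hK0 : (0:ℝ) < 2 ^ n := by positivity
  have hM0 : (0:ℝ) ≤ (n:ℝ)^c := by positivity
  have hF10 : 10 * ((n:ℝ)^c + 1) ≤ F := by
    rw [hF, le_div_iff₀ hδ0]
    nlinarith
  have hF0 : (0:ℝ) < F := by nlinarith
  have hFge : (10:ℝ) ≤ F := by nlinarith
  have hε0 : (0:ℝ) ≤ 1 / (2^n * F) := by positivity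
  have hNle : (((Finset.univ.filter fun s : Fin n → Bool => wt s ≤ c).card : ℕ) : ℝ)
      ≤ (n:ℝ)^c + 1 := by
    calc (((Finset.univ.filter fun s : Fin n → Bool => wt s ≤ c).card : ℕ) : ℝ)
        ≤ ((n^c + 1 : ℕ) : ℝ) := by exact_mod_cast count_wt_le (n := n) hc
      _ = (n:ℝ)^c + 1 := by push_cast; ring
  have hN0 : (0:ℝ) ≤ (((Finset.univ.filter fun s : Fin n → Bool => wt s ≤ c).card : ℕ) : ℝ) := by
    positivity
  have h10N : 10 * (((Finset.univ.filter fun s : Fin n → Bool => wt s ≤ c).card : ℕ) : ℝ) ≤ F := by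
    linarith
  -- step 1: drop the (1-lam) factor
  have step1 : ∑ s ∈ Finset.univ.filter (fun s : Fin n → Bool => wt s ≤ c),
        (1 - lam) ^ (2 * wt s) * phat' s ^ 2
      ≤ ∑ s ∈ Finset.univ.filter (fun s : Fin n → Bool => wt s ≤ c), phat' s ^ 2 := by
    refine Finset.sum_le_sum fun s _ => ?_
    have h01 : (0:ℝ) ≤ 1 - lam := by linarith
    have h11 : (1 - lam) ^ (2 * wt s) ≤ 1 := pow_le_one₀ h01 (by linarith)
    nlinarith [sq_nonneg (phat' s), pow_nonneg h01 (2 * wt s)]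
  -- step 2: termwise bound on phat'
  have step2 : ∑ s ∈ Finset.univ.filter (fun s : Fin n → Bool => wt s ≤ c), phat' s ^ 2
      ≤ ∑ s ∈ Finset.univ.filter (fun s : Fin n → Bool => wt s ≤ c),
          (fhat p s ^ 2 + (2 * (1/2^n) * (1/(2^n*F)) + (1/(2^n*F)) ^ 2)) := by
    refine Finset.sum_le_sum fun s hsT => ?_
    have hwt : wt s ≤ c := (Finset.mem_filter.mp hsT).2
    have h1 := happrox s hwt
    have hab : |phat' s| ≤ |fhat p s| + 1/(2^n*F) := by
      calc |phat' s| = |fhat p s - (fhat p s - phat' s)| := by ring_nf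
        _ ≤ |fhat p s| + |fhat p s - phat' s| := abs_sub _ _
        _ ≤ |fhat p s| + 1/(2^n*F) := by linarith
    have hfb : |fhat p s| ≤ 1/2^n := fhat_abs_le p hp0 hp1 s
    have h3 : phat' s ^ 2 ≤ (|fhat p s| + 1/(2^n*F))^2 := by
      rw [← sq_abs (phat' s)]
      exact pow_le_pow_left₀ (abs_nonneg _) hab 2
    have h5 : |fhat p s|^2 = fhat p s ^ 2 := sq_abs _
    nlinarith [abs_nonneg (fhat p s)]
  -- step 3: sum the constant and use Parseval
  have step3 : ∑ s ∈ Finset.univ.filter (fun s : Fin n → Bool => wt s ≤ c),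
        (fhat p s ^ 2 + (2 * (1/2^n) * (1/(2^n*F)) + (1/(2^n*F)) ^ 2))
      ≤ α / (2^n)^2 + (((Finset.univ.filter fun s : Fin n → Bool => wt s ≤ c).card : ℕ) : ℝ)
          * (2 * (1/2^n) * (1/(2^n*F)) + (1/(2^n*F)) ^ 2) := by
    rw [Finset.sum_add_distrib, Finset.sum_const, nsmul_eq_mul]
    have hsub : ∑ s ∈ Finset.univ.filter (fun s : Fin n → Bool => wt s ≤ c), fhat p s ^ 2
        ≤ ∑ s : Fin n → Bool, fhat p s ^ 2 :=
      Finset.sum_le_sum_of_subset_of_nonneg (Finset.filter_subset _ _)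
        (fun s _ _ => sq_nonneg _)
    have hpar : ∑ s : Fin n → Bool, fhat p s ^ 2 ≤ α / (2^n)^2 := by
      rw [parseval]
      calc (1/2^n) * ∑ x, p x ^ 2 ≤ (1/2^n) * (α / 2^n) :=
            mul_le_mul_of_nonneg_left hp2 (by positivity)
        _ = α / (2^n)^2 := by
            rw [div_mul_div_comm, one_mul, sq]
    linarith
  have main : ∑ s ∈ Finset.univ.filter (fun s : Fin n → Bool => wt s ≤ c),
        (1 - lam) ^ (2 * wt s) * phat' s ^ 2
      ≤ α / (2^n)^2 + (((Finset.univ.filter fun s : Fin n → Bool => wt s ≤ c).card : ℕ) : ℝ)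
          * (2 * (1/2^n) * (1/(2^n*F)) + (1/(2^n*F)) ^ 2) :=
    le_trans step1 (le_trans step2 step3)
  have hpow : (2:ℝ) ^ (2 * n) = ((2:ℝ)^n)^2 := by
    rw [two_mul, pow_add, sq]
  calc (2:ℝ) ^ (2 * n) * ∑ s ∈ Finset.univ.filter (fun s : Fin n → Bool => wt s ≤ c),
        (1 - lam) ^ (2 * wt s) * phat' s ^ 2
      ≤ ((2:ℝ)^n)^2 * (α / (2^n)^2
          + (((Finset.univ.filter fun s : Fin n → Bool => wt s ≤ c).card : ℕ) : ℝ)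
            * (2 * (1/2^n) * (1/(2^n*F)) + (1/(2^n*F)) ^ 2)) := by
        rw [hpow]
        exact mul_le_mul_of_nonneg_left main (by positivity)
    _ ≤ α + 1 := tail_bound (2^n) F _ α hK0 hF0 hN0 h10N hFge
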